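/- Let X be a geodesic Ptolemy metric space, c: [0,∞) → X a geodesic ray parameterized by arclength, and b_c(x) = lim_{t→∞} (d(x, c(t)) − t) its Busemann function. Then b_c is well-defined (the limit exists) and is a convex function: for any midpoint m of x and y, b_c(m) ≤ (b_c(x) + b_c(y))/2. -/

import Mathlib

/-- In a geodesic Ptolemy metric space, the Busemann function
`b_c(x) = lim_{t→∞} (d(x,c(t)) − t)` of a geodesic ray `c` is well-defined and
convex: `b_c(m) ≤ (b_c(x)+b_c(y))/2` for every midpoint `m` of `x` and `y`. -/
theorem stmt_18 {X : Type*} [MetricSpace X]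
    (hgeo : ∀ x y : X, ∃ f : ℝ → X, f 0 = x ∧ f (dist x y) = y ∧
      ∀ s t : ℝ, s ∈ Set.Icc 0 (dist x y) → t ∈ Set.Icc 0 (dist x y) →
        dist (f s) (f t) = |s - t|)
    (hpt : ∀ x y z w : X, dist x y * dist z w ≤ dist x z * dist y w + dist x w * dist y z)
    (c : ℝ → X) (hc : ∀ s t : ℝ, 0 ≤ s → 0 ≤ t → dist (c s) (c t) = |s - t|) :
    ∃ b : X → ℝ,
      (∀ x : X, Filter.Tendsto (fun t => dist x (c t) - t) Filter.atTop (nhds (b x))) ∧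
      (∀ x y m : X, dist x m = dist x y / 2 → dist m y = dist x y / 2 →
        b m ≤ (b x + b y) / 2) := by
  set g : X → ℝ → ℝ := fun x t => dist x (c (max t 0)) - max t 0 with hg
  have hanti : ∀ x : X, Antitone (g x) := by
    intro x s t hst
    have hs : (0:ℝ) ≤ max s 0 := le_max_right _ _
    have ht : (0:ℝ) ≤ max t 0 := le_max_right _ _
    have hst' : max s 0 ≤ max t 0 := max_le_max hst le_rfl
    have htri := dist_triangle x (c (max s 0)) (c (max t 0))
    rw [hc _ _ hs ht, abs_of_nonpos (by linarith)] at htri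
    simp only [g]
    linarith
  have hbdd : ∀ x : X, BddBelow (Set.range (g x)) := by
    intro x
    refine ⟨-dist x (c 0), ?_⟩
    rintro _ ⟨t, rfl⟩
    have ht : (0:ℝ) ≤ max t 0 := le_max_right _ _
    have htri := dist_triangle (c 0) x (c (max t 0))
    rw [hc 0 _ le_rfl ht, abs_of_nonpos (by linarith), dist_comm (c 0) x] at htri
    simp only [g]
    linarith
  have hlim : ∀ x : X, Filter.Tendsto (g x) Filter.atTop (nhds (⨅ t, g x t)) :=
    fun x => tendsto_atTop_ciInf (hanti x) (hbdd x)
  refine ⟨fun x => ⨅ t, g x t, ?_, ?_⟩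
  · intro x
    refine Filter.Tendsto.congr' ?_ (hlim x)
    filter_upwards [Filter.eventually_ge_atTop (0:ℝ)] with t ht
    simp only [g, max_eq_left ht]
  · intro x y m hxm hmy
    rcases eq_or_lt_of_le (dist_nonneg (x := x) (y := y)) with hd | hd
    · have hx : x = m := by
        have : dist x m = 0 := by rw [hxm, ← hd]; ring
        exact dist_eq_zero.mp this
      have hy : m = y := by
        have : dist m y = 0 := by rw [hmy, ← hd]; ring
        exact dist_eq_zero.mp this
      subst hx; subst hy
      linarith [le_refl (⨅ t, g x t)]
    · have key : ∀ t : ℝ, g m t ≤ (g x t + g y t) / 2 := by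
        intro t
        have h := hpt x y m (c (max t 0))
        rw [dist_comm y m, hxm, hmy] at h
        have h2 : dist x y * dist m (c (max t 0)) ≤
            dist x y * ((dist x (c (max t 0)) + dist y (c (max t 0))) / 2) := by
          nlinarith
        have h3 := (mul_le_mul_iff_right₀ hd).mp h2
        simp only [g]
        linarith
      exact le_of_tendsto_of_tendsto' (hlim m) (((hlim x).add (hlim y)).div_const 2) key
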